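/- Let φ : ℝ⁴∖{0} → ℝ⁴, φ(x) = x/|x|², and λ²(x) = 1/|x|⁴. Then for all α, β ∈ {1,2,3,4} and all x ≠ 0: δ^{αβ}·Δ(λ²)(x) + div(Δφ^β·∇φ^α)(x) + div(Δφ^α·∇φ^β)(x) = Δφ^α(x)·Δφ^β(x). (That is, the inversion on ℝ⁴ satisfies the fourth defining condition for a biharmonic morphism between flat spaces.) -/

import Mathlib

open scoped RealInnerProductSpace

noncomputable section

abbrev E (n : ℕ) := EuclideanSpace ℝ (Fin n)

/-- Partial derivative in the `i`-th coordinate direction. -/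
def pd {m : ℕ} (u : E m → ℝ) (i : Fin m) : E m → ℝ :=
  fun x => fderiv ℝ u x (EuclideanSpace.single i 1)

/-- Euclidean Laplacian `Δu = Σᵢ ∂²u/∂xᵢ²`. -/
def lap {m : ℕ} (u : E m → ℝ) : E m → ℝ :=
  fun x => ∑ i, pd (pd u i) i x

/-- Euclidean divergence of a vector field. -/
def div' {m : ℕ} (V : E m → E m) : E m → ℝ :=
  fun x => ∑ i, pd (fun y => V y i) i x

namespace Bih

def r2 : E 4 → ℝ := fun y => ∑ j, y j ^ 2

lemma r2_eq (y : E 4) : r2 y = ‖y‖ ^ 2 := by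
  rw [EuclideanSpace.norm_eq, Real.sq_sqrt (Finset.sum_nonneg fun i _ => sq_nonneg _)]
  simp [r2, Real.norm_eq_abs, sq_abs]

lemma r2_ne {y : E 4} (hy : y ≠ 0) : r2 y ≠ 0 := by
  rw [r2_eq]
  exact pow_ne_zero 2 (norm_ne_zero_iff.mpr hy)

lemma dA_coord (j : Fin 4) (x : E 4) : DifferentiableAt ℝ (fun y : E 4 => y j) x :=
  (EuclideanSpace.proj (𝕜 := ℝ) j).differentiableAt

lemma dA_r2 (x : E 4) : DifferentiableAt ℝ r2 x := by
  apply DifferentiableAt.fun_sum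
  intro j _
  exact (dA_coord j x).pow 2

lemma dA_powinv (k : ℕ) {x : E 4} (hx : x ≠ 0) :
    DifferentiableAt ℝ (fun y => ((r2 y) ^ k)⁻¹) x :=
  ((dA_r2 x).pow k).inv (pow_ne_zero k (r2_ne hx))

/-! ### basic pd calculus -/

lemma pd_congr {u v : E 4 → ℝ} {x : E 4} (h : u =ᶠ[nhds x] v) (i : Fin 4) :
    pd u i x = pd v i x := by
  unfold pd
  rw [h.fderiv_eq]

lemma pd_coord (j i : Fin 4) (x : E 4) :
    pd (fun y : E 4 => y j) i x = if j = i then 1 else 0 := by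
  have h : HasFDerivAt (fun y : E 4 => y j) (EuclideanSpace.proj (𝕜 := ℝ) j) x :=
    (EuclideanSpace.proj (𝕜 := ℝ) j).hasFDerivAt
  rw [pd, h.fderiv]
  simp [EuclideanSpace.single_apply, eq_comm]

lemma pd_add {u v : E 4 → ℝ} {x : E 4} (hu : DifferentiableAt ℝ u x)
    (hv : DifferentiableAt ℝ v x) (i : Fin 4) :
    pd (fun y => u y + v y) i x = pd u i x + pd v i x := by
  simp [pd, fderiv_fun_add hu hv]

lemma pd_sub {u v : E 4 → ℝ} {x : E 4} (hu : DifferentiableAt ℝ u x)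
    (hv : DifferentiableAt ℝ v x) (i : Fin 4) :
    pd (fun y => u y - v y) i x = pd u i x - pd v i x := by
  simp [pd, fderiv_fun_sub hu hv]

lemma pd_const_mul {u : E 4 → ℝ} {x : E 4} (hu : DifferentiableAt ℝ u x) (c : ℝ) (i : Fin 4) :
    pd (fun y => c * u y) i x = c * pd u i x := by
  simp [pd, fderiv_const_mul hu c]

lemma pd_mul {u v : E 4 → ℝ} {x : E 4} (hu : DifferentiableAt ℝ u x)
    (hv : DifferentiableAt ℝ v x) (i : Fin 4) :
    pd (fun y => u y * v y) i x = u x * pd v i x + v x * pd u i x := by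
  simp [pd, fderiv_fun_mul hu hv]

lemma pd_zero (x : E 4) (i : Fin 4) : pd (fun _ : E 4 => (0 : ℝ)) i x = 0 := by
  simp [pd]

/-! ### derivative of `r2` and of inverse powers of `r2` -/

def Dr2 (x : E 4) : E 4 →L[ℝ] ℝ := ∑ j, (2 * x j) • EuclideanSpace.proj (𝕜 := ℝ) j

lemma hr2 (x : E 4) : HasFDerivAt r2 (Dr2 x) x := by
  apply HasFDerivAt.fun_sum
  intro j _
  have h : HasFDerivAt (fun y : E 4 => y j) (EuclideanSpace.proj (𝕜 := ℝ) j) x :=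
    (EuclideanSpace.proj (𝕜 := ℝ) j).hasFDerivAt
  have h2 := (hasDerivAt_pow 2 (x j)).comp_hasFDerivAt x h
  norm_num at h2
  exact h2

lemma Dr2_apply (x : E 4) (i : Fin 4) : Dr2 x (EuclideanSpace.single i 1) = 2 * x i := by
  simp [Dr2, EuclideanSpace.single_apply, eq_comm]

lemma pd_r2 (x : E 4) (i : Fin 4) : pd r2 i x = 2 * x i := by
  rw [pd, (hr2 x).fderiv, Dr2_apply]

lemma hasF_powinv (k : ℕ) {x : E 4} (hx : x ≠ 0) :
    HasFDerivAt (fun y => ((r2 y) ^ k)⁻¹)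
      ((-(k * r2 x ^ (k - 1)) / (r2 x ^ k) ^ 2) • Dr2 x) x := by
  have h1 : HasDerivAt (fun t : ℝ => (t ^ k)⁻¹) (-(k * r2 x ^ (k - 1)) / (r2 x ^ k) ^ 2)
      (r2 x) := by
    have h2 := (hasDerivAt_pow k (r2 x)).fun_inv (pow_ne_zero k (r2_ne hx))
    simpa using h2
  exact h1.comp_hasFDerivAt x (hr2 x)

lemma pd_powinv (k : ℕ) {x : E 4} (hx : x ≠ 0) (i : Fin 4) :
    pd (fun y => ((r2 y) ^ k)⁻¹) i x
      = -(2 * k : ℝ) * x i * ((r2 x) ^ (k + 1))⁻¹ := by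
  cases k with
  | zero =>
    have h : (fun y : E 4 => ((r2 y) ^ 0)⁻¹) = fun _ => (1 : ℝ) := by
      funext y; simp
    rw [h]
    simp [pd]
  | succ m =>
    rw [pd, (hasF_powinv (m + 1) hx).fderiv]
    simp only [ContinuousLinearMap.coe_smul', Pi.smul_apply, Dr2_apply, smul_eq_mul,
      Nat.add_sub_cancel]
    have hr := r2_ne hx
    push_cast
    field_simp
    ring

/-! ### monomial derivatives -/

lemma pd_m1 (a : Fin 4) (k : ℕ) {x : E 4} (hx : x ≠ 0) (i : Fin 4) :
    pd (fun y => y a * ((r2 y) ^ k)⁻¹) i x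
      = (if a = i then 1 else 0) * ((r2 x) ^ k)⁻¹
        - (2 * k : ℝ) * x a * x i * ((r2 x) ^ (k + 1))⁻¹ := by
  rw [pd_mul (dA_coord a x) (dA_powinv k hx) i, pd_powinv k hx i, pd_coord a i x]
  ring

lemma dA_m1 (a : Fin 4) (k : ℕ) {x : E 4} (hx : x ≠ 0) :
    DifferentiableAt ℝ (fun y => y a * ((r2 y) ^ k)⁻¹) x :=
  (dA_coord a x).mul (dA_powinv k hx)

lemma pd_m2 (a b : Fin 4) (k : ℕ) {x : E 4} (hx : x ≠ 0) (i : Fin 4) :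
    pd (fun y => y a * (y b * ((r2 y) ^ k)⁻¹)) i x
      = ((if a = i then 1 else 0) * x b + (if b = i then 1 else 0) * x a)
            * ((r2 x) ^ k)⁻¹
        - (2 * k : ℝ) * x a * x b * x i * ((r2 x) ^ (k + 1))⁻¹ := by
  rw [pd_mul (dA_coord a x) (dA_m1 b k hx) i, pd_m1 b k hx i, pd_coord a i x]
  ring

lemma dA_m2 (a b : Fin 4) (k : ℕ) {x : E 4} (hx : x ≠ 0) :
    DifferentiableAt ℝ (fun y => y a * (y b * ((r2 y) ^ k)⁻¹)) x :=
  (dA_coord a x).mul (dA_m1 b k hx)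

lemma pd_m3 (a b c : Fin 4) (k : ℕ) {x : E 4} (hx : x ≠ 0) (i : Fin 4) :
    pd (fun y => y a * (y b * (y c * ((r2 y) ^ k)⁻¹))) i x
      = ((if a = i then 1 else 0) * x b * x c + (if b = i then 1 else 0) * x a * x c
            + (if c = i then 1 else 0) * x a * x b) * ((r2 x) ^ k)⁻¹
        - (2 * k : ℝ) * x a * x b * x c * x i * ((r2 x) ^ (k + 1))⁻¹ := by
  rw [pd_mul (dA_coord a x) (dA_m2 b c k hx) i, pd_m2 b c k hx i, pd_coord a i x]
  ring

lemma dA_m3 (a b c : Fin 4) (k : ℕ) {x : E 4} (hx : x ≠ 0) :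
    DifferentiableAt ℝ (fun y => y a * (y b * (y c * ((r2 y) ^ k)⁻¹))) x :=
  (dA_coord a x).mul (dA_m2 b c k hx)

/-! ### the map `φ` and its derivatives -/

def fφ (a : Fin 4) : E 4 → ℝ := fun y => y a * ((r2 y) ^ 1)⁻¹

def Pf (a i : Fin 4) : E 4 → ℝ := fun y =>
  (if a = i then ((r2 y) ^ 1)⁻¹ else 0) - 2 * (y a * (y i * ((r2 y) ^ 2)⁻¹))

lemma pd_f (a : Fin 4) {x : E 4} (hx : x ≠ 0) (i : Fin 4) :
    pd (fφ a) i x = Pf a i x := by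
  unfold fφ Pf
  rw [pd_m1 a 1 hx i]
  by_cases hai : a = i
  · subst hai
    simp only [eq_self_iff_true, if_true]
    push_cast
    ring
  · simp only [if_neg hai]
    push_cast
    ring

lemma pd_f_ev (a i : Fin 4) {x : E 4} (hx : x ≠ 0) :
    pd (fφ a) i =ᶠ[nhds x] Pf a i :=
  Filter.eventuallyEq_of_mem (compl_singleton_mem_nhds hx) (fun y hy => pd_f a hy i)

lemma pd_Pf (a : Fin 4) {x : E 4} (hx : x ≠ 0) (i : Fin 4) :
    pd (Pf a i) i x
      = (if a = i then -4 * x i * ((r2 x) ^ 2)⁻¹ else 0)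
        + (-2 * x a * ((r2 x) ^ 2)⁻¹ + 8 * x a * ((r2 x) ^ 3)⁻¹ * x i ^ 2) := by
  unfold Pf
  by_cases hai : a = i
  · subst hai
    simp only [eq_self_iff_true, if_true]
    rw [pd_sub (dA_powinv 1 hx) ((dA_m2 a a 2 hx).const_mul 2) a,
      pd_const_mul (dA_m2 a a 2 hx) 2 a, pd_m2 a a 2 hx a, pd_powinv 1 hx a]
    simp only [eq_self_iff_true, if_true]
    push_cast
    ring
  · simp only [if_neg hai]
    rw [pd_sub (differentiableAt_const (0 : ℝ)) ((dA_m2 a i 2 hx).const_mul 2) i,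
      pd_const_mul (dA_m2 a i 2 hx) 2 i, pd_m2 a i 2 hx i, pd_zero]
    simp only [if_neg hai, eq_self_iff_true, if_true]
    push_cast
    ring

lemma lap_f (a : Fin 4) {x : E 4} (hx : x ≠ 0) :
    lap (fφ a) x = -4 * x a * ((r2 x) ^ 2)⁻¹ := by
  unfold lap
  have step : ∀ i : Fin 4, pd (pd (fφ a) i) i x
      = (if a = i then -4 * x i * ((r2 x) ^ 2)⁻¹ else 0)
        + (-2 * x a * ((r2 x) ^ 2)⁻¹ + 8 * x a * ((r2 x) ^ 3)⁻¹ * x i ^ 2) := by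
    intro i
    rw [pd_congr (pd_f_ev a i hx) i, pd_Pf a hx i]
  rw [Finset.sum_congr rfl fun i _ => step i, Finset.sum_add_distrib, Finset.sum_ite_eq,
    Finset.sum_add_distrib, Finset.sum_const, ← Finset.mul_sum,
    show (∑ i, x i ^ 2) = r2 x from rfl]
  have hr := r2_ne hx
  simp only [Finset.mem_univ, if_pos, ite_true, Finset.card_univ, Fintype.card_fin,
    nsmul_eq_mul]
  field_simp
  ring

/-! ### gradient components -/

lemma grad_comp (u : E 4 → ℝ) (x : E 4) (i : Fin 4) :
    gradient u x i = pd u i x := by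
  rw [gradient, pd]
  rw [show (InnerProductSpace.toDual ℝ (E 4)).symm (fderiv ℝ u x) i
      = ⟪EuclideanSpace.single i (1 : ℝ),
          (InnerProductSpace.toDual ℝ (E 4)).symm (fderiv ℝ u x)⟫ by
    simp [EuclideanSpace.inner_single_left]]
  rw [real_inner_comm, InnerProductSpace.toDual_symm_apply]

/-! ### Laplacian of λ² -/

lemma lap_l2 {x : E 4} (hx : x ≠ 0) :
    lap (fun y => ((r2 y) ^ 2)⁻¹) x = 8 * ((r2 x) ^ 3)⁻¹ := by
  unfold lap
  have ev : ∀ i : Fin 4, pd (fun y => ((r2 y) ^ 2)⁻¹) i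
      =ᶠ[nhds x] (fun y => (-4 : ℝ) * (y i * ((r2 y) ^ 3)⁻¹)) := by
    intro i
    refine Filter.eventuallyEq_of_mem (compl_singleton_mem_nhds hx) (fun y hy => ?_)
    rw [pd_powinv 2 hy i]
    push_cast
    ring
  have step : ∀ i : Fin 4, pd (pd (fun y => ((r2 y) ^ 2)⁻¹) i) i x
      = -4 * ((r2 x) ^ 3)⁻¹ + 24 * ((r2 x) ^ 4)⁻¹ * x i ^ 2 := by
    intro i
    rw [pd_congr (ev i) i, pd_const_mul (dA_m1 i 3 hx) (-4) i, pd_m1 i 3 hx i]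
    simp only [if_pos rfl, ite_true]
    push_cast
    ring
  rw [Finset.sum_congr rfl fun i _ => step i, Finset.sum_add_distrib, Finset.sum_const,
    ← Finset.mul_sum, show (∑ i, x i ^ 2) = r2 x from rfl]
  have hr := r2_ne hx
  simp only [Finset.card_univ, Fintype.card_fin, nsmul_eq_mul]
  field_simp
  ring

/-! ### the divergence terms -/

lemma div_term (a b : Fin 4) {x : E 4} (hx : x ≠ 0) :
    div' (fun y => lap (fφ b) y • gradient (fφ a) y) x
      = (if a = b then -4 * ((r2 x) ^ 3)⁻¹ else 0) + 8 * x a * x b * ((r2 x) ^ 4)⁻¹ := by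
  unfold div'
  have ev : ∀ i : Fin 4, (fun y => (lap (fφ b) y • gradient (fφ a) y) i)
      =ᶠ[nhds x] (fun y =>
        ((-4 : ℝ) * if a = i then 1 else 0) * (y b * ((r2 y) ^ 3)⁻¹)
          + 8 * (y a * (y b * (y i * ((r2 y) ^ 4)⁻¹)))) := by
    intro i
    refine Filter.eventuallyEq_of_mem (compl_singleton_mem_nhds hx) (fun y hy => ?_)
    have hcomp : (lap (fφ b) y • gradient (fφ a) y) i
        = lap (fφ b) y * gradient (fφ a) y i := rfl
    have hgrad : gradient (fφ a) y i = Pf a i y := by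
      rw [grad_comp, pd_f a hy i]
    show (lap (fφ b) y • gradient (fφ a) y) i = _
    rw [hcomp, lap_f b hy, hgrad]
    unfold Pf
    have hr := r2_ne hy
    by_cases hai : a = i
    · subst hai
      simp only [eq_self_iff_true, if_true]
      field_simp
      ring
    · simp only [if_neg hai]
      field_simp
      ring
  have step : ∀ i : Fin 4, pd (fun y => (lap (fφ b) y • gradient (fφ a) y) i) i x
      = (if a = i then
            (-4 * (if b = i then 1 else 0) * ((r2 x) ^ 3)⁻¹ + 32 * x b * x i * ((r2 x) ^ 4)⁻¹)
          else 0)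
        + ((if b = i then 8 * x a * x i * ((r2 x) ^ 4)⁻¹ else 0)
          + (8 * x a * x b * ((r2 x) ^ 4)⁻¹ + -64 * x a * x b * ((r2 x) ^ 5)⁻¹ * x i ^ 2)) := by
    intro i
    rw [pd_congr (ev i) i,
      pd_add ((dA_m1 b 3 hx).const_mul _) ((dA_m3 a b i 4 hx).const_mul 8) i,
      pd_const_mul (dA_m1 b 3 hx) _ i, pd_const_mul (dA_m3 a b i 4 hx) 8 i,
      pd_m1 b 3 hx i, pd_m3 a b i 4 hx i]
    by_cases hai : a = i <;> by_cases hbi : b = i <;>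
      simp only [hai, hbi, if_neg, eq_self_iff_true, if_true, ite_true, ite_false,
        not_false_iff] <;> push_cast <;> ring
  rw [Finset.sum_congr rfl fun i _ => step i, Finset.sum_add_distrib, Finset.sum_ite_eq,
    Finset.sum_add_distrib, Finset.sum_ite_eq, Finset.sum_add_distrib, Finset.sum_const,
    ← Finset.mul_sum, show (∑ i, x i ^ 2) = r2 x from rfl]
  have hr := r2_ne hx
  simp only [Finset.mem_univ, if_pos, ite_true, Finset.card_univ, Fintype.card_fin,
    nsmul_eq_mul]
  by_cases hab : a = b
  · subst hab
    simp only [if_pos rfl, ite_true]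
    field_simp
    ring
  · have hba : b ≠ a := fun h => hab h.symm
    simp only [if_neg hab, if_neg hba, ite_false]
    field_simp
    ring

end Bih

open Bih in
/-- The inversion `φ(x) = x/|x|²` on `ℝ⁴∖{0}`, with `λ²(x) = 1/|x|⁴`, satisfies the fourth
defining condition for a biharmonic morphism between flat spaces:
`δ^{αβ}Δ(λ²) + div(Δφ^β∇φ^α) + div(Δφ^α∇φ^β) = Δφ^α·Δφ^β`. -/
theorem inversion_fourth_condition (α β : Fin 4) (x : E 4) (hx : x ≠ 0) :
    (if α = β then (1:ℝ) else 0) * lap (fun y : E 4 => (‖y‖ ^ 4)⁻¹) x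
      + div' (fun y : E 4 =>
          lap (fun z : E 4 => ((‖z‖ ^ 2)⁻¹ • z) β) y
            • gradient (fun z : E 4 => ((‖z‖ ^ 2)⁻¹ • z) α) y) x
      + div' (fun y : E 4 =>
          lap (fun z : E 4 => ((‖z‖ ^ 2)⁻¹ • z) α) y
            • gradient (fun z : E 4 => ((‖z‖ ^ 2)⁻¹ • z) β) y) x
      = lap (fun y : E 4 => ((‖y‖ ^ 2)⁻¹ • y) α) x
          * lap (fun y : E 4 => ((‖y‖ ^ 2)⁻¹ • y) β) x := by
  have eφ : ∀ a : Fin 4, (fun z : E 4 => ((‖z‖ ^ 2)⁻¹ • z) a) = fφ a := by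
    intro a
    funext z
    show (‖z‖ ^ 2)⁻¹ * z a = z a * ((r2 z) ^ 1)⁻¹
    rw [r2_eq]
    ring
  have eL : (fun y : E 4 => (‖y‖ ^ 4)⁻¹) = (fun y => ((r2 y) ^ 2)⁻¹) := by
    funext y
    rw [r2_eq]
    ring_nf
  rw [eL, eφ α, eφ β, lap_l2 hx, lap_f α hx, lap_f β hx, div_term α β hx, div_term β α hx]
  have hr := r2_ne hx
  by_cases h : α = β
  · subst h
    simp only [if_pos rfl, ite_true]
    field_simp
    ring
  · have h' : β ≠ α := fun hh => h hh.symm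
    simp only [if_neg h, if_neg h', ite_false]
    field_simp
    ring

end
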